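/- Let A, Y, R, Z be discrete random variables on a finite probability space with all joint probabilities positive. If A ⟂ R | (Y, Z), then the conditional odds ratio between R and Y given (A, Z) does not depend on A: OR(R=0, Y=y | A=a, Z=z) = OR(R=0, Y=y | A=a', Z=z) for all a, a', y, z. -/
import Mathlib

open scoped Classical
open Finset

/-- Probability of an event under a pmf on a finite sample space. -/
noncomputable def Pr {Ω : Type*} [Fintype Ω] (μ : Ω → ℝ) (P : Ω → Prop) : ℝ :=
  ∑ ω, if P ω then μ ω else 0

/-- Conditional probability `p(P | Q)`. -/
noncomputable def cPr {Ω : Type*} [Fintype Ω] (μ : Ω → ℝ) (P Q : Ω → Prop) : ℝ :=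
  Pr μ (fun ω => P ω ∧ Q ω) / Pr μ Q

theorem odds_ratio_invariant_to_treatment
    {Ω 𝓐 𝓨 𝓩 : Type*} [Fintype Ω]
    (μ : Ω → ℝ) (hμ : ∀ ω, 0 ≤ μ ω) (hsum : ∑ ω, μ ω = 1)
    (A : Ω → 𝓐) (Y : Ω → 𝓨) (R : Ω → ℕ) (Z : Ω → 𝓩)
    (hbin : ∀ ω, R ω = 0 ∨ R ω = 1) (y0 : 𝓨)
    (hpos : ∀ (a : 𝓐) (y : 𝓨) (z : 𝓩) (r : ℕ), r = 0 ∨ r = 1 →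
      0 < Pr μ (fun ω => A ω = a ∧ Y ω = y ∧ Z ω = z ∧ R ω = r))
    (hS2 : ∀ (a : 𝓐) (y : 𝓨) (z : 𝓩) (r : ℕ),
      cPr μ (fun ω => R ω = r) (fun ω => A ω = a ∧ Y ω = y ∧ Z ω = z) =
      cPr μ (fun ω => R ω = r) (fun ω => Y ω = y ∧ Z ω = z)) :
    ∀ (a a' : 𝓐) (y : 𝓨) (z : 𝓩),
      (cPr μ (fun ω => R ω = 0) (fun ω => Y ω = y ∧ A ω = a ∧ Z ω = z) /
        cPr μ (fun ω => R ω = 1) (fun ω => Y ω = y ∧ A ω = a ∧ Z ω = z)) *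
      (cPr μ (fun ω => R ω = 1) (fun ω => Y ω = y0 ∧ A ω = a ∧ Z ω = z) /
        cPr μ (fun ω => R ω = 0) (fun ω => Y ω = y0 ∧ A ω = a ∧ Z ω = z)) =
      (cPr μ (fun ω => R ω = 0) (fun ω => Y ω = y ∧ A ω = a' ∧ Z ω = z) /
        cPr μ (fun ω => R ω = 1) (fun ω => Y ω = y ∧ A ω = a' ∧ Z ω = z)) *
      (cPr μ (fun ω => R ω = 1) (fun ω => Y ω = y0 ∧ A ω = a' ∧ Z ω = z) /
        cPr μ (fun ω => R ω = 0) (fun ω => Y ω = y0 ∧ A ω = a' ∧ Z ω = z)) := by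
  intro a a' y z
  have key : ∀ (a : 𝓐) (y : 𝓨) (r : ℕ),
      cPr μ (fun ω => R ω = r) (fun ω => Y ω = y ∧ A ω = a ∧ Z ω = z) =
      cPr μ (fun ω => R ω = r) (fun ω => Y ω = y ∧ Z ω = z) := by
    intro a y r
    have hperm : (fun ω => Y ω = y ∧ A ω = a ∧ Z ω = z) =
        (fun ω => A ω = a ∧ Y ω = y ∧ Z ω = z) := by
      funext ω; exact propext (by tauto)
    rw [hperm, hS2]
  rw [key a y 0, key a y 1, key a y0 0, key a y0 1,
      key a' y 0, key a' y 1, key a' y0 0, key a' y0 1]
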